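/- Symmetry identity for higher-order generalized Euler polynomials: for all n ≥ 0, all m ≥ 1, and all x, y, ∑_{j=0}^{n} C(n,j) w₂^j w₁^{n−j} E_{n−j,χ}^{(m)}(w₂ x) ∑_{k=0}^{j} C(j,k) T_{k,χ}(w₁ d − 1) E_{j−k,χ}^{(m−1)}(w₁ y) = ∑_{j=0}^{n} C(n,j) w₁^j w₂^{n−j} E_{n−j,χ}^{(m)}(w₁ x) ∑_{k=0}^{j} C(j,k) T_{k,χ}(w₂ d − 1) E_{j−k,χ}^{(m−1)}(w₂ y). -/

import Mathlib

open PowerSeries Finset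

/-- Generating function `2 ∑_{a<d} (-1)^a χ(a) e^{at} / (e^{dt}+1)` as a formal power series. -/
noncomputable def genEulerSeries (d : ℕ) (χ : DirichletCharacter ℂ d) : PowerSeries ℂ :=
  (2 * ∑ a ∈ Finset.range d, ((-1 : ℂ) ^ a * χ (a : ZMod d)) •
      PowerSeries.rescale (a : ℂ) (PowerSeries.exp ℂ)) *
    (PowerSeries.rescale (d : ℂ) (PowerSeries.exp ℂ) + 1)⁻¹

/-- Generalized higher-order Euler polynomial `E_{n,χ}^{(m)}(x)`: `n!` times the `n`-th
coefficient of `(genEulerSeries d χ)^m * e^{xt}`. -/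
noncomputable def genEuler (d : ℕ) (χ : DirichletCharacter ℂ d) (m n : ℕ) (x : ℂ) : ℂ :=
  (n.factorial : ℂ) *
    PowerSeries.coeff n ((genEulerSeries d χ) ^ m * PowerSeries.rescale x (PowerSeries.exp ℂ))

/-- Alternating power sum `T_{k,χ}(m) = ∑_{l=0}^{m} (-1)^l χ(l) l^k`. -/
noncomputable def altPowerSum (d : ℕ) (χ : DirichletCharacter ℂ d) (k m : ℕ) : ℂ :=
  ∑ l ∈ Finset.range (m + 1), (-1 : ℂ) ^ l * χ (l : ZMod d) * (l : ℂ) ^ k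

noncomputable def EP (c : ℂ) : PowerSeries ℂ := PowerSeries.rescale c (PowerSeries.exp ℂ)

lemma EP_mul (a b : ℂ) : EP a * EP b = EP (a + b) :=
  PowerSeries.exp_mul_exp_eq_exp_add a b

lemma EP_zero : EP 0 = 1 := by
  simp [EP, PowerSeries.rescale_zero]

lemma rescale_EP (a c : ℂ) : rescale a (EP c) = EP (c * a) :=
  PowerSeries.rescale_rescale _ _ _

lemma coeff_EP (c : ℂ) (n : ℕ) : coeff n (EP c) = c ^ n * algebraMap ℚ ℂ (1 / n.factorial) := by
  simp [EP]

lemma constantCoeff_EP (c : ℂ) : constantCoeff (EP c) = 1 := by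
  rw [← coeff_zero_eq_constantCoeff_apply, coeff_EP]; simp

lemma geom_lemma (d : ℕ) (w : ℕ) (hw : Odd w) :
    (EP (d : ℂ) + 1) * ∑ j ∈ range w, (-1 : ℂ) ^ j • EP ((j : ℂ) * d) =
      EP ((w : ℂ) * d) + 1 := by
  set f : ℕ → PowerSeries ℂ := fun j => (-1 : ℂ) ^ j • EP ((j : ℂ) * d) with hf
  have hterm : ∀ j, (EP (d : ℂ) + 1) * f j = f j - f (j + 1) := by
    intro j
    have h1 : EP (d : ℂ) * EP ((j : ℂ) * d) = EP (((j : ℕ) + 1 : ℂ) * d) := by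
      rw [EP_mul]; ring_nf
    simp only [hf, mul_smul_comm, add_mul, one_mul, pow_succ]
    rw [h1]
    push_cast
    module
  rw [Finset.mul_sum]
  refine (Finset.sum_congr rfl fun j _ => hterm j).trans ?_
  rw [Finset.sum_range_sub' f w]
  have h0 : f 0 = 1 := by simp [hf, EP_zero]
  have hw' : f w = -EP ((w : ℂ) * d) := by
    simp [hf, hw.neg_one_pow]
  rw [h0, hw']
  ring

lemma sum_range_mul_eq {M : Type*} [AddCommMonoid M] (f : ℕ → M) (w d : ℕ) :
    ∑ l ∈ range (w * d), f l = ∑ j ∈ range w, ∑ a ∈ range d, f (j * d + a) := by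
  induction w with
  | zero => simp
  | succ w ih =>
      rw [Nat.succ_mul, Finset.sum_range_add, ih, Finset.sum_range_succ]

noncomputable def halfA (d : ℕ) (χ : DirichletCharacter ℂ d) : PowerSeries ℂ :=
  ∑ a ∈ Finset.range d, ((-1 : ℂ) ^ a * χ (a : ZMod d)) • EP (a : ℂ)

noncomputable def SS (d : ℕ) (χ : DirichletCharacter ℂ d) (w : ℕ) : PowerSeries ℂ :=
  ∑ l ∈ Finset.range (w * d), ((-1 : ℂ) ^ l * χ (l : ZMod d)) • EP (l : ℂ)

lemma SS_eq (d : ℕ) (hd : Odd d) (χ : DirichletCharacter ℂ d) (w : ℕ) :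
    SS d χ w = halfA d χ * ∑ j ∈ range w, (-1 : ℂ) ^ j • EP ((j : ℂ) * d) := by
  rw [halfA, Finset.sum_mul_sum, SS,
    sum_range_mul_eq (fun l => ((-1 : ℂ) ^ l * χ (l : ZMod d)) • EP (l : ℂ)) w d,
    Finset.sum_comm]
  refine Finset.sum_congr rfl fun a _ => Finset.sum_congr rfl fun j _ => ?_
  have hcast : ((j * d + a : ℕ) : ZMod d) = (a : ZMod d) := by
    push_cast
    simp [ZMod.natCast_self]
  have hsign : (-1 : ℂ) ^ (j * d + a) = (-1) ^ j * (-1) ^ a := by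
    rw [pow_add, pow_mul', hd.neg_one_pow]
  rw [hcast, hsign, smul_mul_smul_comm, EP_mul]
  push_cast
  ring_nf


lemma genEulerSeries_eq (d : ℕ) (χ : DirichletCharacter ℂ d) :
    genEulerSeries d χ = (2 * halfA d χ) * (EP (d : ℂ) + 1)⁻¹ := rfl

lemma constantCoeff_V (c : ℂ) : constantCoeff (EP c + 1) = 2 := by
  rw [map_add, constantCoeff_EP, map_one]; norm_num

lemma V_ne_zero (c : ℂ) : EP c + 1 ≠ 0 := fun h => by
  have := constantCoeff_V c
  rw [h, map_zero] at this
  norm_num at this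

lemma inv_mul_V (c : ℂ) : (EP c + 1)⁻¹ * (EP c + 1) = 1 :=
  PowerSeries.inv_mul_cancel _ (by rw [constantCoeff_V]; norm_num)

lemma G_mul_V (d : ℕ) (χ : DirichletCharacter ℂ d) :
    genEulerSeries d χ * (EP (d : ℂ) + 1) = 2 * halfA d χ := by
  rw [genEulerSeries_eq, mul_assoc, inv_mul_V, mul_one]

lemma SS_mul_V (d : ℕ) (hd : Odd d) (χ : DirichletCharacter ℂ d) (w : ℕ) (hw : Odd w) :
    SS d χ w * (EP (d : ℂ) + 1) = halfA d χ * (EP ((w : ℂ) * d) + 1) := by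
  rw [SS_eq d hd χ w, mul_assoc, mul_comm _ (EP (d : ℂ) + 1), geom_lemma d w hw]

lemma rescale_V (u : ℂ) (c : ℂ) : rescale u (EP c + 1) = EP (c * u) + 1 := by
  rw [map_add, map_one, rescale_EP]

noncomputable def Side (d : ℕ) (χ : DirichletCharacter ℂ d) (m : ℕ) (u v : ℕ) (x y : ℂ) :
    PowerSeries ℂ :=
  rescale (u : ℂ) (genEulerSeries d χ ^ m * EP ((v : ℂ) * x)) *
    rescale (v : ℂ) (SS d χ u * genEulerSeries d χ ^ (m - 1) * EP ((u : ℂ) * y))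

lemma side_mul (d : ℕ) (hd : Odd d) (χ : DirichletCharacter ℂ d) (u v : ℕ) (hu : Odd u)
    (m : ℕ) (hm : 1 ≤ m) (x y : ℂ) :
    Side d χ m u v x y * ((EP ((d : ℂ) * u) + 1) ^ m * (EP ((d : ℂ) * v) + 1) ^ m * 2) =
      (rescale (u : ℂ) (2 * halfA d χ)) ^ m * (rescale (v : ℂ) (2 * halfA d χ)) ^ m *
        (EP ((d : ℂ) * u * v) + 1) * EP ((u : ℂ) * v * (x + y)) := by
  obtain ⟨m', rfl⟩ : ∃ m', m = m' + 1 := ⟨m - 1, (Nat.succ_pred_eq_of_pos hm).symm⟩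
  have e1 : (rescale (u : ℂ) (genEulerSeries d χ)) ^ (m' + 1) * (EP ((d : ℂ) * u) + 1) ^ (m' + 1)
      = (rescale (u : ℂ) (2 * halfA d χ)) ^ (m' + 1) := by
    rw [← mul_pow, ← rescale_V (u : ℂ) (d : ℂ), ← map_mul, G_mul_V]
  have e2 : (rescale (v : ℂ) (genEulerSeries d χ)) ^ m' * (EP ((d : ℂ) * v) + 1) ^ m'
      = (rescale (v : ℂ) (2 * halfA d χ)) ^ m' := by
    rw [← mul_pow, ← rescale_V (v : ℂ) (d : ℂ), ← map_mul, G_mul_V]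
  have e3 : rescale (v : ℂ) (SS d χ u) * (EP ((d : ℂ) * v) + 1)
      = rescale (v : ℂ) (halfA d χ) * (EP ((u : ℂ) * d * v) + 1) := by
    rw [← rescale_V (v : ℂ) (d : ℂ), ← map_mul, SS_mul_V d hd χ u hu, map_mul, rescale_V]
  have hz : EP ((u : ℂ) * d * v) = EP ((d : ℂ) * u * v) := by ring_nf
  have hE : EP ((v : ℂ) * x * u) * EP ((u : ℂ) * y * v) = EP ((u : ℂ) * v * (x + y)) := by
    rw [EP_mul]; ring_nf
  have hQ : rescale (v : ℂ) (2 * halfA d χ) = 2 * rescale (v : ℂ) (halfA d χ) := by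
    rw [map_mul, map_ofNat]
  have expand : Side d χ (m' + 1) u v x y
      = (rescale (u : ℂ) (genEulerSeries d χ)) ^ (m' + 1) * EP ((v : ℂ) * x * u) *
        (rescale (v : ℂ) (SS d χ u) * ((rescale (v : ℂ) (genEulerSeries d χ)) ^ m' *
          EP ((u : ℂ) * y * v))) := by
    simp only [Side, Nat.add_sub_cancel, map_mul, map_pow, rescale_EP]
    ring
  rw [expand]
  calc (rescale (u : ℂ) (genEulerSeries d χ)) ^ (m' + 1) * EP ((v : ℂ) * x * u) *
        (rescale (v : ℂ) (SS d χ u) * ((rescale (v : ℂ) (genEulerSeries d χ)) ^ m' *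
          EP ((u : ℂ) * y * v))) *
        ((EP ((d : ℂ) * u) + 1) ^ (m' + 1) * (EP ((d : ℂ) * v) + 1) ^ (m' + 1) * 2)
      = ((rescale (u : ℂ) (genEulerSeries d χ)) ^ (m' + 1) * (EP ((d : ℂ) * u) + 1) ^ (m' + 1)) *
        (((rescale (v : ℂ) (genEulerSeries d χ)) ^ m' * (EP ((d : ℂ) * v) + 1) ^ m') *
          ((rescale (v : ℂ) (SS d χ u) * (EP ((d : ℂ) * v) + 1)) *
            ((EP ((v : ℂ) * x * u) * EP ((u : ℂ) * y * v)) * 2))) := by ring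
    _ = (rescale (u : ℂ) (2 * halfA d χ)) ^ (m' + 1) * (rescale (v : ℂ) (2 * halfA d χ)) ^ (m' + 1) *
        (EP ((d : ℂ) * u * v) + 1) * EP ((u : ℂ) * v * (x + y)) := by
      rw [e1, e2, e3, hE, hz, hQ]; ring

lemma side_symm (d : ℕ) (hd : Odd d) (χ : DirichletCharacter ℂ d) (u v : ℕ)
    (hu : Odd u) (hv : Odd v) (m : ℕ) (hm : 1 ≤ m) (x y : ℂ) :
    Side d χ m u v x y = Side d χ m v u x y := by
  have h2 : (2 : PowerSeries ℂ) ≠ 0 := by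
    intro h
    have := congrArg constantCoeff h
    rw [map_ofNat, map_zero] at this
    norm_num at this
  have hc : ((EP ((d : ℂ) * u) + 1) ^ m * (EP ((d : ℂ) * v) + 1) ^ m * 2 : PowerSeries ℂ) ≠ 0 :=
    mul_ne_zero (mul_ne_zero (pow_ne_zero _ (V_ne_zero _)) (pow_ne_zero _ (V_ne_zero _))) h2
  apply mul_right_cancel₀ hc
  rw [side_mul d hd χ u v hu m hm x y]
  have hswap : Side d χ m v u x y * ((EP ((d : ℂ) * u) + 1) ^ m * (EP ((d : ℂ) * v) + 1) ^ m * 2)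
      = Side d χ m v u x y * ((EP ((d : ℂ) * v) + 1) ^ m * (EP ((d : ℂ) * u) + 1) ^ m * 2) := by
    ring
  rw [hswap, side_mul d hd χ v u hv m hm x y]
  ring_nf

lemma egf_mul (f g : PowerSeries ℂ) (n : ℕ) :
    (n.factorial : ℂ) * coeff n (f * g) =
      ∑ j ∈ range (n + 1), (n.choose j : ℂ) *
        (((n - j).factorial : ℂ) * coeff (n - j) f) *
        ((j.factorial : ℂ) * coeff j g) := by
  rw [mul_comm f g, PowerSeries.coeff_mul,
    Finset.Nat.sum_antidiagonal_eq_sum_range_succ (fun a b => coeff a g * coeff b f) n,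
    Finset.mul_sum]
  refine Finset.sum_congr rfl fun j hj => ?_
  have hj' : j ≤ n := Nat.lt_succ_iff.mp (Finset.mem_range.mp hj)
  have hfact : (n.choose j : ℂ) * (n - j).factorial * j.factorial = n.factorial := by
    rw_mod_cast [mul_right_comm, Nat.choose_mul_factorial_mul_factorial hj']
  rw [← hfact]
  ring


lemma egf_SS (d : ℕ) (χ : DirichletCharacter ℂ d) (w k : ℕ) (h : 0 < w * d) :
    (k.factorial : ℂ) * coeff k (SS d χ w) = altPowerSum d χ k (w * d - 1) := by
  rw [altPowerSum, Nat.sub_add_cancel h, SS, map_sum, Finset.mul_sum]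
  refine Finset.sum_congr rfl fun l _ => ?_
  rw [LinearMap.map_smul, smul_eq_mul, coeff_EP]
  have : algebraMap ℚ ℂ (1 / k.factorial) = ((k.factorial : ℂ))⁻¹ := by
    push_cast
    simp
  rw [this]
  have hk : (k.factorial : ℂ) ≠ 0 := Nat.cast_ne_zero.mpr k.factorial_ne_zero
  field_simp


lemma genEuler_def (d : ℕ) (χ : DirichletCharacter ℂ d) (m n : ℕ) (x : ℂ) :
    genEuler d χ m n x =
      (n.factorial : ℂ) * coeff n (genEulerSeries d χ ^ m * EP x) := rfl

lemma side_coeff (d : ℕ) (χ : DirichletCharacter ℂ d) (u v m n : ℕ) (x y : ℂ)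
    (hud : 0 < u * d) :
    (n.factorial : ℂ) * coeff n (Side d χ m u v x y) =
      ∑ j ∈ range (n + 1), (n.choose j : ℂ) * (v : ℂ) ^ j * (u : ℂ) ^ (n - j) *
        genEuler d χ m (n - j) ((v : ℂ) * x) *
        ∑ k ∈ range (j + 1), (j.choose k : ℂ) * altPowerSum d χ k (u * d - 1) *
          genEuler d χ (m - 1) (j - k) ((u : ℂ) * y) := by
  rw [Side, egf_mul]
  refine Finset.sum_congr rfl fun j hj => ?_
  have h1 : coeff (n - j) (rescale (u : ℂ) (genEulerSeries d χ ^ m * EP ((v : ℂ) * x)))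
      = (u : ℂ) ^ (n - j) * coeff (n - j) (genEulerSeries d χ ^ m * EP ((v : ℂ) * x)) :=
    coeff_rescale _ _ _
  have h2 : coeff j (rescale (v : ℂ)
        (SS d χ u * genEulerSeries d χ ^ (m - 1) * EP ((u : ℂ) * y)))
      = (v : ℂ) ^ j * coeff j (SS d χ u * genEulerSeries d χ ^ (m - 1) * EP ((u : ℂ) * y)) :=
    coeff_rescale _ _ _
  have hinner : (j.factorial : ℂ) *
        coeff j (SS d χ u * genEulerSeries d χ ^ (m - 1) * EP ((u : ℂ) * y))
      = ∑ k ∈ range (j + 1), (j.choose k : ℂ) * altPowerSum d χ k (u * d - 1) *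
          genEuler d χ (m - 1) (j - k) ((u : ℂ) * y) := by
    have hcomm : SS d χ u * genEulerSeries d χ ^ (m - 1) * EP ((u : ℂ) * y)
        = (genEulerSeries d χ ^ (m - 1) * EP ((u : ℂ) * y)) * SS d χ u := by ring
    rw [hcomm, egf_mul]
    refine Finset.sum_congr rfl fun k hk => ?_
    rw [egf_SS d χ u k hud, ← genEuler_def]
    ring
  rw [h1, h2, genEuler_def, ← hinner]
  ring

theorem symmetry_higher_order (d : ℕ) (hd : Odd d) (hd0 : 0 < d)
    (χ : DirichletCharacter ℂ d) (w₁ w₂ : ℕ) (hw₁ : Odd w₁) (hw₁0 : 0 < w₁)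
    (hw₂ : Odd w₂) (hw₂0 : 0 < w₂) (n m : ℕ) (hm : 1 ≤ m) (x y : ℂ) :
    ∑ j ∈ Finset.range (n + 1), (n.choose j : ℂ) * (w₂ : ℂ) ^ j * (w₁ : ℂ) ^ (n - j) *
        genEuler d χ m (n - j) ((w₂ : ℂ) * x) *
        ∑ k ∈ Finset.range (j + 1), (j.choose k : ℂ) * altPowerSum d χ k (w₁ * d - 1) *
          genEuler d χ (m - 1) (j - k) ((w₁ : ℂ) * y) =
      ∑ j ∈ Finset.range (n + 1), (n.choose j : ℂ) * (w₁ : ℂ) ^ j * (w₂ : ℂ) ^ (n - j) *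
        genEuler d χ m (n - j) ((w₁ : ℂ) * x) *
        ∑ k ∈ Finset.range (j + 1), (j.choose k : ℂ) * altPowerSum d χ k (w₂ * d - 1) *
          genEuler d χ (m - 1) (j - k) ((w₂ : ℂ) * y) := by
  have h1 := side_coeff d χ w₁ w₂ m n x y (Nat.mul_pos hw₁0 hd0)
  have h2 := side_coeff d χ w₂ w₁ m n x y (Nat.mul_pos hw₂0 hd0)
  rw [← h1, ← h2, side_symm d hd χ w₁ w₂ hw₁ hw₂ m hm x y]
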